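/- Let k be an algebraically closed field of characteristic zero, A a finitely generated commutative k-algebra, G a finite group acting on A by k-algebra automorphisms, and M a finitely generated G-equivariant A-module. If for every maximal ideal m of A the stabilizer G_m acts trivially on M ⊗_A A/m, then M is generated as an A-module by its G-invariant elements M^G; in particular there exist finitely many G-invariant elements of M that generate M as an A-module. -/
import Mathlib


/-!
STATEMENT 10: Over an algebraically closed field `k` of characteristic zero,
if a finite group `G` acts on a finitely generated commutative `k`-algebra `A`
and `M` is a finitely generated `G`-equivariant `A`-module such that for every
maximal ideal `m` the stabilizer `G_m` acts trivially on the fiber `M ⊗ A/m`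
(equivalently: `g • y - y ∈ mM` for all `y` and all `g ∈ G_m`), then `M` is
generated over `A` by its `G`-invariant elements, indeed by finitely many of
them.
-/

theorem generated_by_invariants_of_trivial_isotropy_on_fibers
    (k : Type*) [Field k] [CharZero k] [IsAlgClosed k]
    (A : Type*) [CommRing A] [Algebra k A] [Algebra.FiniteType k A]
    (G : Type*) [Group G] [Finite G] [MulSemiringAction G A] [SMulCommClass G k A]
    (M : Type*) [AddCommGroup M] [Module A M] [Module.Finite A M]
    [DistribMulAction G M]
    (hGM : ∀ (g : G) (a : A) (x : M), g • (a • x) = (g • a) • (g • x))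
    -- for every maximal ideal `m`, the stabilizer `G_m` acts trivially on `M ⊗ A/m`
    (h : ∀ (m : Ideal A), m.IsMaximal →
      ∀ (g : G), (∀ a : A, g • a ∈ m ↔ a ∈ m) →
        ∀ y : M, g • y - y ∈ m • (⊤ : Submodule A M)) :
    Submodule.span A {x : M | ∀ g : G, g • x = x} = ⊤ ∧
    ∃ S : Finset M, (∀ x ∈ S, ∀ g : G, g • x = x) ∧
      Submodule.span A (S : Set M) = ⊤ := by
  classical
  haveI := Fintype.ofFinite G
  set Inv : Set M := {x : M | ∀ g : G, g • x = x} with hInv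
  -- Key step: for every maximal ideal m, span A Inv ⊔ m • ⊤ = ⊤.
  have key : ∀ (m : Ideal A), m.IsMaximal →
      Submodule.span A Inv ⊔ m • (⊤ : Submodule A M) = ⊤ := by
    intro m hm
    haveI : m.IsPrime := hm.isPrime
    rw [eq_top_iff]
    rintro x₀ -
    -- For g not stabilizing m, find c with g • c ∈ m and c ∉ m.
    have exc : ∀ g : G, ¬ (∀ b : A, g • b ∈ m ↔ b ∈ m) →
        ∃ c : A, g • c ∈ m ∧ c ∉ m := by
      intro g hg
      set φ := MulSemiringAction.toRingHom G A g with hφ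
      have hsurj : Function.Surjective φ := fun a =>
        ⟨g⁻¹ • a, by simp [hφ]⟩
      have hI : (m.comap φ).IsMaximal := Ideal.comap_isMaximal_of_surjective φ hsurj
      have hne : m.comap φ ≠ m := by
        intro hEq
        apply hg
        intro b
        constructor
        · intro hb
          have : b ∈ m.comap φ := by simpa [hφ, Ideal.mem_comap] using hb
          rwa [hEq] at this
        · intro hb
          have : b ∈ m.comap φ := by rw [hEq]; exact hb
          simpa [hφ, Ideal.mem_comap] using this
      have hnle : ¬ m.comap φ ≤ m := fun hle => hne (hI.eq_of_le hm.ne_top hle)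
      obtain ⟨c, hcI, hcm⟩ := SetLike.not_le_iff_exists.mp hnle
      exact ⟨c, by simpa [hφ, Ideal.mem_comap] using hcI, hcm⟩
    -- define the auxiliary element a
    have hb : ∀ g : G, ∃ c : A, c ∉ m ∧ ((∀ b : A, g • b ∈ m ↔ b ∈ m) ∨ g • c ∈ m) := by
      intro g
      by_cases hg : ∀ b : A, g • b ∈ m ↔ b ∈ m
      · exact ⟨1, (Ideal.ne_top_iff_one m).mp hm.ne_top, Or.inl hg⟩
      · obtain ⟨c, hc1, hc2⟩ := exc g hg
        exact ⟨c, hc2, Or.inr hc1⟩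
    choose b hbm hbs using hb
    set a : A := ∏ g : G, b g with ha
    have ha_not : a ∉ m := by
      intro hproda
      obtain ⟨g, -, hg⟩ := (Ideal.IsPrime.prod_mem_iff).mp hproda
      exact hbm g hg
    have ha_mem : ∀ g : G, ¬ (∀ c : A, g • c ∈ m ↔ c ∈ m) → g • a ∈ m := by
      intro g hg
      have hfac : g • b g ∈ m := (hbs g).resolve_left hg
      have hprod : g • a = ∏ g' : G, g • b g' :=
        map_prod (MulSemiringAction.toRingHom G A g) b Finset.univ
      rw [hprod]
      obtain ⟨d, hd⟩ := Finset.dvd_prod_of_mem (fun g' => g • b g') (Finset.mem_univ g)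
      rw [hd]
      exact Ideal.mul_mem_right _ _ hfac
    -- the averaged element
    set x : M := a • x₀ with hx
    set e : M := ∑ g : G, g • x with he
    have he_inv : e ∈ Inv := by
      intro g₀
      have : g₀ • e = ∑ g : G, (g₀ * g) • x := by
        rw [he, Finset.smul_sum]
        exact Finset.sum_congr rfl fun g _ => (mul_smul g₀ g x).symm
      rw [this]
      exact Fintype.sum_equiv (Equiv.mulLeft g₀) _ _ (fun g => rfl)
    have heN : e ∈ Submodule.span A Inv := Submodule.subset_span he_inv
    -- splitting the sum
    set P : G → Prop := fun g => ∀ c : A, g • c ∈ m ↔ c ∈ m with hP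
    have hP1 : P 1 := by intro c; simp
    set n : ℕ := (Finset.univ.filter P).card with hn
    have hn0 : n ≠ 0 := by
      have : (1 : G) ∈ Finset.univ.filter P := Finset.mem_filter.mpr ⟨Finset.mem_univ _, hP1⟩
      exact Finset.card_ne_zero_of_mem this
    have he2 : e - n • x ∈ m • (⊤ : Submodule A M) := by
      have hsplit : e = (∑ g ∈ Finset.univ.filter P, g • x)
          + ∑ g ∈ Finset.univ.filter (fun g => ¬ P g), g • x :=
        (Finset.sum_filter_add_sum_filter_not _ _ _).symm
      have hkey : e - n • x = (∑ g ∈ Finset.univ.filter P, (g • x - x))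
          + ∑ g ∈ Finset.univ.filter (fun g => ¬ P g), g • x := by
        rw [Finset.sum_sub_distrib, Finset.sum_const, ← hn, hsplit]
        abel
      rw [hkey]
      refine Submodule.add_mem _ (Submodule.sum_mem _ fun g hg => ?_)
        (Submodule.sum_mem _ fun g hg => ?_)
      · exact h m hm g (Finset.mem_filter.mp hg).2 x
      · have hgP : ¬ P g := (Finset.mem_filter.mp hg).2
        have : g • x = (g • a) • (g • x₀) := hGM g a x₀
        rw [this]
        exact Submodule.smul_mem_smul (ha_mem g hgP) Submodule.mem_top
    -- invert n using char zero
    have hnk : ((n : k)) ≠ 0 := Nat.cast_ne_zero.mpr hn0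
    set c₁ : A := algebraMap k A ((n : k)⁻¹) with hc₁
    have hcn : c₁ * (n : A) = 1 := by
      have h1 : ((n : ℕ) : A) = algebraMap k A ((n : ℕ) : k) := by
        rw [map_natCast]
      rw [hc₁, h1, ← map_mul, inv_mul_cancel₀ hnk, map_one]
    have h3 : c₁ • e - x ∈ m • (⊤ : Submodule A M) := by
      have : c₁ • (e - n • x) = c₁ • e - x := by
        rw [smul_sub, ← Nat.cast_smul_eq_nsmul A n x, smul_smul, hcn, one_smul]
      rw [← this]
      exact Submodule.smul_mem _ _ he2
    -- use that a is invertible mod m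
    obtain ⟨u, v, hv, huv⟩ := hm.exists_inv ha_not
    have hx0 : x₀ = (u • (c₁ • e) - u • (c₁ • e - x)) + v • x₀ := by
      rw [smul_sub, sub_sub_cancel, hx, smul_smul, ← add_smul, huv, one_smul]
    rw [hx0]
    refine Submodule.add_mem _ (Submodule.sub_mem _ (Submodule.mem_sup_left ?_)
      (Submodule.mem_sup_right ?_)) (Submodule.mem_sup_right ?_)
    · exact Submodule.smul_mem _ _ (Submodule.smul_mem _ _ heN)
    · exact Submodule.smul_mem _ _ h3
    · exact Submodule.smul_mem_smul hv Submodule.mem_top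
  -- Nakayama-type argument: span A Inv = ⊤
  have hNtop : Submodule.span A Inv = ⊤ := by
    by_contra hne
    haveI : IsCoatomic (Submodule A M) :=
      CompleteLattice.coatomic_of_top_compact
        ((Submodule.fg_iff_compact _).mp (Module.finite_def.mp ‹Module.Finite A M›))
    obtain ⟨Pc, hPc, hNP⟩ :=
      (eq_top_or_exists_le_coatom (Submodule.span A Inv)).resolve_left hne
    haveI : IsSimpleModule A (M ⧸ Pc) := isSimpleModule_iff_isCoatom.mpr hPc
    have hmax : (Module.annihilator A (M ⧸ Pc)).IsMaximal :=
      IsSimpleModule.annihilator_isMaximal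
    have hsub : Module.annihilator A (M ⧸ Pc) • (⊤ : Submodule A M) ≤ Pc := by
      rw [Submodule.smul_le]
      intro r hr y _
      have h0 : r • (Submodule.Quotient.mk y : M ⧸ Pc) = 0 :=
        Module.mem_annihilator.mp hr _
      rwa [← Submodule.Quotient.mk_smul, Submodule.Quotient.mk_eq_zero] at h0
    have htop := key _ hmax
    have : (⊤ : Submodule A M) ≤ Pc := htop ▸ sup_le hNP hsub
    exact hPc.1 (top_le_iff.mp this)
  refine ⟨hNtop, ?_⟩
  -- extract a finite generating set of invariants
  have hmem : ∀ y : M, y ∈ Submodule.span A Inv := fun y => hNtop ▸ Submodule.mem_top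
  choose f hfs hfm using fun y : M => Submodule.mem_span_finite_of_mem_span (hmem y)
  obtain ⟨T, hT⟩ := Module.finite_def.mp ‹Module.Finite A M›
  refine ⟨T.biUnion f, ?_, ?_⟩
  · intro y hy g
    obtain ⟨z, hz, hyz⟩ := Finset.mem_biUnion.mp hy
    exact hfs z hyz g
  · rw [eq_top_iff, ← hT]
    refine Submodule.span_le.mpr fun y hy => ?_
    exact Submodule.span_mono
      (fun w hw => Finset.mem_coe.mpr (Finset.mem_biUnion.mpr ⟨y, hy, hw⟩)) (hfm y)
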